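/- For every natural number n ≥ 1, the integral from 0 to 1 of (ln t)/(1+t)^{n+1} dt equals -(ln 2)/n - (1/(n·2^{n-1}))·∑_{j=1}^{n-1} C(n-1, j)·H_j, where H_j = ∑_{i=1}^{j} 1/i is the j-th harmonic number. -/

import Mathlib

open Real Finset

noncomputable def hh (j : ℕ) : ℝ := ∑ i ∈ Finset.range j, (1:ℝ)/(i+1)

lemma choose_div_succ (N : ℕ) :
    ∑ i ∈ Finset.range (N+1), (N.choose i : ℝ)/(i+1) = ((2:ℝ)^(N+1) - 1)/(N+1) := by
  have key : ∀ i, (N.choose i : ℝ)/(i+1) = ((N+1).choose (i+1) : ℝ)/(N+1) := by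
    intro i
    have h := Nat.add_one_mul_choose_eq N i
    have h' : ((N:ℝ)+1) * (N.choose i : ℝ) = ((N+1).choose (i+1) : ℝ) * ((i:ℝ)+1) := by
      exact_mod_cast congrArg (Nat.cast (R := ℝ)) h
    have hi : ((i:ℝ)+1) ≠ 0 := by positivity
    have hN : ((N:ℝ)+1) ≠ 0 := by positivity
    field_simp
    linarith [h']
  rw [Finset.sum_congr rfl (fun i _ => key i), ← Finset.sum_div]
  congr 1
  have h2 : ∑ i ∈ Finset.range (N+2), ((N+1).choose i : ℝ) = 2^(N+1) := by
    exact_mod_cast congrArg (Nat.cast (R := ℝ)) (Nat.sum_range_choose (N+1))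
  rw [Finset.sum_range_succ'] at h2
  simp at h2 ⊢
  linarith

lemma binom_harm (N : ℕ) :
    ∑ j ∈ Finset.range (N+1), (N.choose j : ℝ) * hh j
      = 2^N * ∑ m ∈ Finset.range N, ((1:ℝ) - 1/2^(m+1))/(m+1) := by
  induction N with
  | zero => simp [hh]
  | succ N ih =>
    have hstep : ∑ j ∈ Finset.range (N+2), ((N+1).choose j : ℝ) * hh j
        = 2 * (∑ j ∈ Finset.range (N+1), (N.choose j : ℝ) * hh j)
          + ((2:ℝ)^(N+1) - 1)/(N+1) := by
      rw [Finset.sum_range_succ']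
      simp only [Nat.choose_succ_succ, Nat.cast_add, add_mul, Finset.sum_add_distrib]
      have h1 : ∀ i, hh (i+1) = hh i + 1/(i+1) := by
        intro i; simp [hh, Finset.sum_range_succ]
      have e1 : ∑ i ∈ Finset.range (N+1), (N.choose i : ℝ) * hh (i+1)
          = (∑ j ∈ Finset.range (N+1), (N.choose j : ℝ) * hh j)
            + ((2:ℝ)^(N+1) - 1)/(N+1) := by
        rw [← choose_div_succ]
        rw [← Finset.sum_add_distrib]
        refine Finset.sum_congr rfl fun i _ => ?_
        rw [h1 i]; ring
      have e2 : ∑ i ∈ Finset.range (N+1), (N.choose (i+1) : ℝ) * hh (i+1)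
          = ∑ j ∈ Finset.range (N+1), (N.choose j : ℝ) * hh j := by
        rw [Finset.sum_range_succ]
        conv_rhs => rw [Finset.sum_range_succ']
        simp [hh]
      rw [e1, e2]
      simp [hh]
      ring
    rw [hstep, ih, Finset.sum_range_succ]
    have hN : ((N:ℝ)+1) ≠ 0 := by positivity
    push_cast
    field_simp
    ring

lemma geom_inv (n : ℕ) (t : ℝ) (ht : 0 < t) :
    1 - ((1+t)^n)⁻¹ = t * ∑ k ∈ Finset.range n, ((1+t)^(k+1))⁻¹ := by
  have hs : (0:ℝ) < 1 + t := by linarith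
  have hsne : (1:ℝ) + t ≠ 0 := ne_of_gt hs
  have hrefl : ∑ k ∈ Finset.range n, ((1+t)^(k+1))⁻¹
      = (∑ j ∈ Finset.range n, (1+t)^j) / (1+t)^n := by
    rw [← Finset.sum_range_reflect (fun j => (1+t)^j) n, Finset.sum_div]
    refine Finset.sum_congr rfl fun k hk => ?_
    have hk' : k + 1 ≤ n := Finset.mem_range.mp hk
    rw [eq_div_iff (pow_ne_zero _ hsne)]
    rw [show n - 1 - k = n - (k+1) by omega, pow_sub₀ _ hsne hk']
    field_simp
  have hgeom : (∑ j ∈ Finset.range n, (1+t)^j) * t = (1+t)^n - 1 := by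
    have := geom_sum_mul (1+t) n
    simpa using this
  rw [hrefl]
  field_simp
  linarith [hgeom]

lemma hasDerivAt_G (n : ℕ) (hn : 1 ≤ n) (t : ℝ) (ht : 0 < t) :
    HasDerivAt (fun x : ℝ => (Real.log x * (1 - ((1+x)^n)⁻¹)
        - (Real.log (1+x) - ∑ m ∈ Finset.range (n-1), ((1+x)^(m+1))⁻¹/(m+1))) / n)
      (Real.log t / (1+t)^(n+1)) t := by
  have hs : (0:ℝ) < 1 + t := by linarith
  have hsne : (1:ℝ) + t ≠ 0 := ne_of_gt hs
  have hst : HasDerivAt (fun x : ℝ => 1 + x) 1 t := (hasDerivAt_id t).const_add 1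
  have hpow : ∀ m : ℕ, HasDerivAt (fun x : ℝ => ((1+x)^m)⁻¹)
      (-(m * (1+t)^(m-1)) / ((1+t)^m)^2) t := by
    intro m
    have := ((hst.fun_pow m).inv (pow_ne_zero _ hsne))
    simp at this; exact this
  have hlog : HasDerivAt Real.log t⁻¹ t := Real.hasDerivAt_log (ne_of_gt ht)
  have h1 : HasDerivAt (fun x : ℝ => Real.log x * (1 - ((1+x)^n)⁻¹))
      (t⁻¹ * (1 - ((1+t)^n)⁻¹) + Real.log t * ((n * (1+t)^(n-1)) / ((1+t)^n)^2)) t := by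
    have := hlog.mul ((hasDerivAt_const t (1:ℝ)).sub (hpow n))
    refine this.congr_deriv ?_; simp only [Pi.sub_apply]; ring
  have h2 : HasDerivAt (fun x : ℝ => Real.log (1+x)) (1+t)⁻¹ t := by
    have := hst.log hsne
    simpa using this
  have h3 : HasDerivAt (fun x : ℝ => ∑ m ∈ Finset.range (n-1), ((1+x)^(m+1))⁻¹/(m+1))
      (∑ m ∈ Finset.range (n-1), (-((m+1 : ℕ) * (1+t)^m) / ((1+t)^(m+1))^2)/(m+1)) t := by
    refine HasDerivAt.fun_sum fun m _ => ?_
    have := (hpow (m+1)).div_const ((m:ℝ)+1)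
    refine this.congr_deriv ?_; simp
  have hD := ((h1.sub (h2.sub h3)).div_const (n:ℝ))
  refine HasDerivAt.congr_deriv hD ?_
  -- now the algebra: show log t/(1+t)^(n+1) equals the big derivative expression
  have hA : t⁻¹ * (1 - ((1+t)^n)⁻¹) = ∑ k ∈ Finset.range n, ((1+t)^(k+1))⁻¹ := by
    rw [geom_inv n t ht]; field_simp
  have hterm : ∀ m : ℕ, (-((m+1 : ℕ) * (1+t)^m) / ((1+t)^(m+1))^2)/((m:ℝ)+1)
      = -((1+t)^(m+2))⁻¹ := by
    intro m
    have hm : ((m:ℝ)+1) ≠ 0 := by positivity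
    push_cast
    field_simp
    ring
  have hsplit : ∑ k ∈ Finset.range n, ((1+t)^(k+1))⁻¹
      = (1+t)⁻¹ + ∑ m ∈ Finset.range (n-1), ((1+t)^(m+2))⁻¹ := by
    obtain ⟨N, rfl⟩ : ∃ N, n = N + 1 := ⟨n-1, by omega⟩
    rw [Finset.sum_range_succ']
    simp only [Nat.add_sub_cancel, pow_one, pow_zero]
    rw [add_comm]
    congr 1
    norm_num
  have hlogterm : Real.log t * ((n * (1+t)^(n-1)) / ((1+t)^n)^2)
      = n * (Real.log t / (1+t)^(n+1)) := by
    have hpow_eq : (1+t)^(n-1) * (1+t)^(n+1) = ((1+t)^n)^2 := by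
      rw [← pow_add, ← pow_mul]
      congr 1
      omega
    have hne1 : ((1+t)^n)^2 ≠ 0 := by positivity
    have hne2 : ((1:ℝ)+t)^(n+1) ≠ 0 := by positivity
    field_simp
    linear_combination (Real.log t) * hpow_eq
  have hsum : ∑ m ∈ Finset.range (n-1), (-((m+1 : ℕ) * (1+t)^m) / ((1+t)^(m+1))^2)/((m:ℝ)+1)
      = -∑ m ∈ Finset.range (n-1), ((1+t)^(m+2))⁻¹ := by
    simp only [hterm, Finset.sum_neg_distrib]
  rw [hA, hsum, hlogterm, hsplit]
  have hnne : (n:ℝ) ≠ 0 := by positivity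
  field_simp
  ring

lemma tendsto_G (n : ℕ) (hn : 1 ≤ n) :
    Filter.Tendsto (fun t : ℝ => (Real.log t * (1 - ((1+t)^n)⁻¹)
        - (Real.log (1+t) - ∑ m ∈ Finset.range (n-1), ((1+t)^(m+1))⁻¹/(m+1))) / n)
      (nhdsWithin 0 (Set.Ioi 0))
      (nhds ((0 - (0 - ∑ m ∈ Finset.range (n-1), (1:ℝ)/(m+1))) / n)) := by
  apply Filter.Tendsto.div_const
  apply Filter.Tendsto.sub
  · -- log t * (1 - (1+t)^n⁻¹) → 0
    have h0 : Filter.Tendsto (fun t : ℝ => Real.log t * t) (nhdsWithin 0 (Set.Ioi 0)) (nhds 0) := by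
      have := tendsto_log_mul_rpow_nhdsGT_zero (r := 1) zero_lt_one
      simpa [Real.rpow_one] using this
    have hA : Filter.Tendsto (fun t : ℝ => ∑ k ∈ Finset.range n, ((1+t)^(k+1))⁻¹)
        (nhdsWithin 0 (Set.Ioi 0)) (nhds (∑ k ∈ Finset.range n, ((1+(0:ℝ))^(k+1))⁻¹)) := by
      apply Filter.Tendsto.mono_left _ nhdsWithin_le_nhds
      exact (ContinuousAt.tendsto (by fun_prop (disch := norm_num)))
    have hmul := (h0.mul hA)
    rw [show (0:ℝ) * (∑ k ∈ Finset.range n, ((1+(0:ℝ))^(k+1))⁻¹) = 0 by ring] at hmul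
    apply hmul.congr'
    filter_upwards [self_mem_nhdsWithin] with t ht
    rw [geom_inv n t ht]
    ring
  · apply Filter.Tendsto.sub
    · have : Filter.Tendsto (fun t : ℝ => Real.log (1+t)) (nhds 0) (nhds (Real.log (1+0))) := by
        apply ContinuousAt.tendsto
        fun_prop (disch := norm_num)
      simpa using this.mono_left nhdsWithin_le_nhds
    · have : Filter.Tendsto (fun t : ℝ => ∑ m ∈ Finset.range (n-1), ((1+t)^(m+1))⁻¹/(m+1))
          (nhds 0) (nhds (∑ m ∈ Finset.range (n-1), ((1+(0:ℝ))^(m+1))⁻¹/(m+1))) := by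
        apply ContinuousAt.tendsto
        fun_prop (disch := norm_num)
      simp only [add_zero, one_pow, inv_one] at this
      exact this.mono_left nhdsWithin_le_nhds

lemma f_contOn (n : ℕ) {a b : ℝ} (ha : 0 < a) :
    ContinuousOn (fun t : ℝ => Real.log t / (1 + t) ^ (n+1)) (Set.Icc a b) := by
  apply ContinuousOn.div
  · apply Real.continuousOn_log.mono
    intro x hx
    simp only [Set.mem_compl_iff, Set.mem_singleton_iff]
    have := hx.1
    intro h; rw [h] at this; linarith
  · fun_prop
  · intro x hx
    have : 0 < 1 + x := by have := hx.1; linarith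
    positivity

lemma f_integrable (n : ℕ) :
    MeasureTheory.IntegrableOn (fun t : ℝ => Real.log t / (1 + t) ^ (n+1))
      (Set.Ioc 0 1) MeasureTheory.volume := by
  set f : ℝ → ℝ := fun t => Real.log t / (1 + t) ^ (n+1) with hf
  have ha : ∀ i : ℕ, (0:ℝ) < 1/(i+1) := by intro i; positivity
  have ha1 : ∀ i : ℕ, (1:ℝ)/(i+1) ≤ 1 := by
    intro i
    rw [div_le_one (by positivity)]
    simp
  apply MeasureTheory.integrableOn_Ioc_of_intervalIntegral_norm_bounded_left
    (l := Filter.atTop) (a := fun i : ℕ => 1/(i+1)) (I := 1)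
  · intro i
    exact ((f_contOn n (ha i)).integrableOn_Icc).mono_set Set.Ioc_subset_Icc_self
  · exact tendsto_one_div_add_atTop_nhds_zero_nat
  · apply Filter.Eventually.of_forall
    intro i
    set ε : ℝ := 1/(i+1) with hε
    have hε0 : 0 < ε := ha i
    have hε1 : ε ≤ 1 := ha1 i
    have hmono : ∫ x in Set.Ioc ε 1, ‖f x‖ ≤ ∫ x in Set.Ioc ε 1, -Real.log x := by
      apply MeasureTheory.setIntegral_mono_on
      · exact MeasureTheory.Integrable.norm
          (((f_contOn n hε0).integrableOn_Icc).mono_set Set.Ioc_subset_Icc_self)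
      · apply MeasureTheory.Integrable.neg
        have hc : ContinuousOn Real.log (Set.Icc ε 1) := by
          apply Real.continuousOn_log.mono
          intro x hx
          simp only [Set.mem_compl_iff, Set.mem_singleton_iff]
          have := hx.1; intro h; rw [h] at this; linarith
        exact hc.integrableOn_Icc.mono_set Set.Ioc_subset_Icc_self
      · exact measurableSet_Ioc
      · intro x hx
        have hx0 : 0 < x := lt_of_lt_of_le hε0 hx.1.le
        have hx1 : x ≤ 1 := hx.2
        have h1x : (1:ℝ) ≤ (1 + x) ^ (n+1) := one_le_pow₀ (by linarith)
        rw [hf]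
        simp only [norm_div, Real.norm_eq_abs]
        have hlog : |Real.log x| = -Real.log x := by
          rw [abs_of_nonpos (Real.log_nonpos hx0.le hx1)]
        rw [hlog, abs_of_pos (by positivity : (0:ℝ) < (1+x)^(n+1))]
        rw [div_le_iff₀ (by positivity)]
        nlinarith [Real.log_nonpos hx0.le hx1]
    refine hmono.trans ?_
    have : ∫ x in Set.Ioc ε 1, -Real.log x = -(∫ x in ε..1, Real.log x) := by
      rw [intervalIntegral.integral_of_le hε1, MeasureTheory.integral_neg]
    rw [this, integral_log]
    simp only [Real.log_one]
    nlinarith [Real.log_nonpos hε0.le hε1, hε0]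

theorem integral_log_div_one_add_pow_one (n : ℕ) (hn : 1 ≤ n) :
    ∫ t in (0:ℝ)..1, Real.log t / (1 + t) ^ (n + 1) =
      -Real.log 2 / n
      - (1 / (n * 2 ^ (n - 1))) *
          ∑ j ∈ Finset.Icc 1 (n - 1),
            ((n - 1).choose j : ℝ) * (∑ i ∈ Finset.Icc 1 j, (1 : ℝ) / i) := by
  set N := n - 1 with hN
  set f : ℝ → ℝ := fun t => Real.log t / (1 + t) ^ (n+1) with hf
  set G : ℝ → ℝ := fun x => (Real.log x * (1 - ((1+x)^n)⁻¹)
      - (Real.log (1+x) - ∑ m ∈ Finset.range N, ((1+x)^(m+1))⁻¹/(m+1))) / n with hG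
  set a : ℕ → ℝ := fun k => 1/(k+1+1) with ha
  have ha_pos : ∀ k, 0 < a k := fun k => by positivity
  have ha_le : ∀ k, a k ≤ 1 := fun k => by
    rw [ha]; rw [div_le_one (by positivity)]; push_cast; linarith
  have ha_tendsto : Filter.Tendsto a Filter.atTop (nhds 0) := by
    have := tendsto_one_div_add_atTop_nhds_zero_nat (𝕜 := ℝ)
    have h2 := this.comp (Filter.tendsto_add_atTop_nat 1)
    refine h2.congr fun k => ?_
    simp only [Function.comp, ha]
    push_cast
    ring
  -- integrability
  have hIoc := f_integrable n
  have hint : IntervalIntegrable f MeasureTheory.volume 0 1 := by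
    rw [intervalIntegrable_iff_integrableOn_Ioc_of_le zero_le_one]
    exact hIoc
  -- FTC on [a k, 1]
  have hFTC : ∀ k, ∫ t in a k..1, f t = G 1 - G (a k) := by
    intro k
    apply intervalIntegral.integral_eq_sub_of_hasDerivAt
    · intro t ht
      rw [Set.uIcc_of_le (ha_le k)] at ht
      exact hasDerivAt_G n hn t (lt_of_lt_of_le (ha_pos k) ht.1)
    · exact hint.mono_set (by
        rw [Set.uIcc_of_le (ha_le k), Set.uIcc_of_le zero_le_one]
        exact Set.Icc_subset_Icc (ha_pos k).le le_rfl)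
  -- limit of RHS
  have hlim1 : Filter.Tendsto (fun k => G 1 - G (a k)) Filter.atTop
      (nhds (G 1 - (0 - (0 - ∑ m ∈ Finset.range N, (1:ℝ)/(m+1))) / n)) := by
    apply Filter.Tendsto.const_sub
    apply (tendsto_G n hn).comp
    apply tendsto_nhdsWithin_of_tendsto_nhds_of_eventually_within _ ha_tendsto
    exact Filter.Eventually.of_forall fun k => ha_pos k
  -- limit of LHS
  have hlim2 : Filter.Tendsto (fun k => ∫ t in a k..1, f t) Filter.atTop
      (nhds (∫ t in (0:ℝ)..1, f t)) := by
    have hsplit : ∀ k, ∫ t in a k..1, f t = (∫ t in (0:ℝ)..1, f t) - ∫ t in (0:ℝ)..a k, f t := by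
      intro k
      have h1 : IntervalIntegrable f MeasureTheory.volume 0 (a k) := hint.mono_set (by
        rw [Set.uIcc_of_le (ha_pos k).le, Set.uIcc_of_le zero_le_one]
        exact Set.Icc_subset_Icc le_rfl (ha_le k))
      have h2 : IntervalIntegrable f MeasureTheory.volume (a k) 1 := hint.mono_set (by
        rw [Set.uIcc_of_le (ha_le k), Set.uIcc_of_le zero_le_one]
        exact Set.Icc_subset_Icc (ha_pos k).le le_rfl)
      have := intervalIntegral.integral_add_adjacent_intervals h1 h2
      linarith
    simp only [hsplit]
    have h0 : Filter.Tendsto (fun k => ∫ t in (0:ℝ)..a k, f t) Filter.atTop (nhds 0) := by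
      have hIcc : MeasureTheory.IntegrableOn f (Set.uIcc 0 1) MeasureTheory.volume := by
        rw [Set.uIcc_of_le zero_le_one, integrableOn_Icc_iff_integrableOn_Ioc]
        exact hIoc
      have hcont := intervalIntegral.continuousOn_primitive_interval hIcc
      have hcw : ContinuousWithinAt (fun x => ∫ t in (0:ℝ)..x, f t) (Set.uIcc 0 1) 0 :=
        hcont 0 (by rw [Set.uIcc_of_le zero_le_one]; exact Set.left_mem_Icc.mpr zero_le_one)
      have := hcw.tendsto
      rw [intervalIntegral.integral_same] at this
      apply this.comp
      apply tendsto_nhdsWithin_of_tendsto_nhds_of_eventually_within _ ha_tendsto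
      apply Filter.Eventually.of_forall
      intro k
      rw [Set.uIcc_of_le zero_le_one]
      exact ⟨(ha_pos k).le, ha_le k⟩
    have := (tendsto_const_nhds (x := ∫ t in (0:ℝ)..1, f t) (f := Filter.atTop (α := ℕ))).sub h0
    simpa using this
  have huniq : ∫ t in (0:ℝ)..1, f t
      = G 1 - (0 - (0 - ∑ m ∈ Finset.range N, (1:ℝ)/(m+1))) / n := by
    exact tendsto_nhds_unique hlim2 (hlim1.congr fun k => (hFTC k).symm)
  rw [huniq]
  -- algebra
  have hG1 : G 1 = (-(Real.log 2 - ∑ m ∈ Finset.range N, ((2:ℝ)^(m+1))⁻¹/(m+1))) / n := by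
    rw [hG]
    norm_num
  rw [hG1]
  -- convert Icc sums to range sums
  have hHj : ∀ j : ℕ, (∑ i ∈ Finset.Icc 1 j, (1:ℝ)/i) = hh j := by
    intro j
    rw [← Finset.Ico_add_one_right_eq_Icc, Finset.sum_Ico_eq_sum_range, hh]
    simp only [Nat.add_sub_cancel]
    refine Finset.sum_congr rfl fun i _ => ?_
    push_cast
    rw [add_comm]
  have hIcc_range : ∑ j ∈ Finset.Icc 1 N, ((N.choose j : ℝ) * (∑ i ∈ Finset.Icc 1 j, (1:ℝ)/i))
      = ∑ j ∈ Finset.range (N+1), (N.choose j : ℝ) * hh j := by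
    rw [Finset.sum_range_succ']
    have : ∑ j ∈ Finset.Icc 1 N, ((N.choose j : ℝ) * (∑ i ∈ Finset.Icc 1 j, (1:ℝ)/i))
        = ∑ i ∈ Finset.range N, (N.choose (i+1) : ℝ) * hh (i+1) := by
      rw [← Finset.Ico_add_one_right_eq_Icc, Finset.sum_Ico_eq_sum_range]
      simp only [Nat.add_sub_cancel]
      refine Finset.sum_congr rfl fun i _ => ?_
      rw [hHj, add_comm]
    rw [this]
    simp [hh]
  rw [hIcc_range, binom_harm]
  have hn0 : (n:ℝ) ≠ 0 := by positivity
  have h2N : ((2:ℝ)^N) ≠ 0 := by positivity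
  have hterm : ∑ m ∈ Finset.range N, ((1:ℝ) - 1/2^(m+1))/(m+1)
      = (∑ m ∈ Finset.range N, (1:ℝ)/(m+1)) - ∑ m ∈ Finset.range N, ((2:ℝ)^(m+1))⁻¹/(m+1) := by
    rw [← Finset.sum_sub_distrib]
    refine Finset.sum_congr rfl fun m _ => ?_
    have : ((m:ℝ)+1) ≠ 0 := by positivity
    field_simp
  rw [hterm]
  field_simp
  ring
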